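/- Let n ≥ 2, let D ∈ ℝ^{(n−1)×(n−1)} be diagonal, x ∈ ℝ^{n−1}, and define the symmetric n×n matrices X = [[D, x],[xᵗ, 0]] (block form) and Y = [[I_{n−1}, 0],[0, −1]]. Set Δ := Tr(X²Y²) − Tr(XYXY) and assume Δ > 0. Let t > 0, let a,b,c ∈ ℝ with b = √(Δ/(2t)), and set X̃ = [[a,b],[b,c]], Ỹ = [[1,0],[0,−1]]. If M₂^{(X,Y)} − t·M₂^{(X̃,Ỹ)} is positive semidefinite, then c = 0 and a = 4xᵗDx/(nΔ). -/

import Mathlib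

open Matrix BigOperators

/-- Words in the free monoid on two letters `X = 0`, `Y = 1`. -/
abbrev Word : Type := List (Fin 2)

/-- Evaluation of a word at a pair of square matrices (`X ↦ A`, `Y ↦ B`). -/
def wEval {m : Type*} [Fintype m] [DecidableEq m] (A B : Matrix m m ℝ) : Word → Matrix m m ℝ
  | [] => 1
  | i :: w => (if i = (0 : Fin 2) then A else B) * wEval A B w

/-- Normalized trace. -/
noncomputable def nTr {m : Type*} [Fintype m] (A : Matrix m m ℝ) : ℝ :=
  A.trace / (Fintype.card m : ℝ)
/-- The seven words of length at most 2, in the order `1, X, Y, X², XY, YX, Y²`. -/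
def w7 : Fin 7 → Word := ![[], [0], [1], [0, 0], [0, 1], [1, 0], [1, 1]]

/-- The 7×7 moment matrix `M₂(β)`, indexed by `1, X, Y, X², XY, YX, Y²`. -/
def M2 (β : Word → ℝ) : Matrix (Fin 7) (Fin 7) ℝ :=
  Matrix.of fun i j => β ((w7 i).reverse ++ w7 j)

/-- Index of a word of length at most 2 among the seven words (junk value on
longer words). -/
def idx : Word → Fin 7
  | [] => 0
  | a :: [] => if a = 0 then 1 else 2
  | a :: b :: _ => if a = 0 then (if b = 0 then 3 else 4) else (if b = 0 then 5 else 6)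

/-- The 7×7 moment matrix generated by a pair of symmetric matrices `(A,B)`. -/
noncomputable def M2mat {m : Type*} [Fintype m] [DecidableEq m] (A B : Matrix m m ℝ) :
    Matrix (Fin 7) (Fin 7) ℝ :=
  Matrix.of fun i j => nTr (wEval A B ((w7 i).reverse ++ w7 j))

/-- `X = [[D, x],[xᵗ, 0]]`. -/
def XofDx (m : ℕ) (D : Matrix (Fin m) (Fin m) ℝ) (x : Fin m → ℝ) :
    Matrix (Fin (m + 1)) (Fin (m + 1)) ℝ :=
  (Matrix.reindex finSumFinEquiv finSumFinEquiv)
    (Matrix.fromBlocks D (Matrix.of fun i (_ : Fin 1) => x i)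
      (Matrix.of fun (_ : Fin 1) j => x j) (0 : Matrix (Fin 1) (Fin 1) ℝ))

/-- `Y = [[I, 0],[0, −1]]`. -/
def YofD (m : ℕ) : Matrix (Fin (m + 1)) (Fin (m + 1)) ℝ :=
  (Matrix.reindex finSumFinEquiv finSumFinEquiv)
    (Matrix.fromBlocks (1 : Matrix (Fin m) (Fin m) ℝ) 0 0 (-1 : Matrix (Fin 1) (Fin 1) ℝ))

/- ### Auxiliary lemmas -/

lemma my_trace_fromBlocks {l m R : Type*} [Fintype l] [Fintype m] [AddCommMonoid R]
    (A : Matrix l l R) (B : Matrix l m R) (C : Matrix m l R) (E : Matrix m m R) :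
    (fromBlocks A B C E).trace = A.trace + E.trace := by
  simp [Matrix.trace, Fintype.sum_sum_type, Matrix.diag]

lemma my_trace_reindex {k l R : Type*} [Fintype k] [Fintype l] [AddCommMonoid R]
    (e : k ≃ l) (A : Matrix k k R) : (Matrix.reindex e e A).trace = A.trace := by
  simp only [Matrix.trace, Matrix.reindex_apply, Matrix.diag, Matrix.submatrix_apply]
  exact Equiv.sum_comp e.symm (fun i => A i i)

lemma wEval_reindex {k l : Type*} [Fintype k] [DecidableEq k] [Fintype l] [DecidableEq l]
    (e : k ≃ l) (A B : Matrix k k ℝ) (w : Word) :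
    wEval (Matrix.reindex e e A) (Matrix.reindex e e B) w
      = Matrix.reindex e e (wEval A B w) := by
  induction w with
  | nil => simp [wEval]
  | cons i w ih =>
      simp only [Matrix.reindex_apply] at ih ⊢
      rw [wEval, wEval, ih]
      split <;> rw [Matrix.submatrix_mul_equiv]

lemma quad_forced {K L Q : ℝ} (hK : K ≤ 0) (h : ∀ r : ℝ, 0 ≤ K * r ^ 2 + L * r + Q) :
    K = 0 ∧ L = 0 := by
  have hQ : 0 ≤ Q := by simpa using h 0
  have hK0 : K = 0 := by
    by_contra hne
    have hKlt : K < 0 := lt_of_le_of_ne hK hne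
    set r := Real.sqrt ((Q + 1) / (-K)) with hr
    have hr2 : r ^ 2 = (Q + 1) / (-K) :=
      Real.sq_sqrt (le_of_lt (div_pos (by linarith) (by linarith)))
    have hKne : -K ≠ 0 := by intro h0; exact hne (by linarith)
    have hKr : K * r ^ 2 = -(Q + 1) := by
      rw [hr2, ← mul_div_assoc, div_eq_iff hKne]; ring
    have h2 := h r
    have h3 := h (-r)
    nlinarith [h2, h3]
  refine ⟨hK0, ?_⟩
  by_contra hL
  have h2 := h (-(Q + 1) / L)
  rw [hK0] at h2
  have : L * (-(Q + 1) / L) = -(Q + 1) := by field_simp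
  rw [this] at h2
  linarith

set_option maxHeartbeats 1000000 in
/-- (Here `n = m + 1` with `m ≥ 1`, so `n ≥ 2`.) -/
theorem stmt12 (m : ℕ) (hm : 1 ≤ m) (D : Matrix (Fin m) (Fin m) ℝ) (hD : D.IsDiag)
    (x : Fin m → ℝ) (t a b c : ℝ) (ht : 0 < t)
    (hΔpos : 0 < nTr (wEval (XofDx m D x) (YofD m) [0, 0, 1, 1]) -
        nTr (wEval (XofDx m D x) (YofD m) [0, 1, 0, 1]))
    (hb : b = Real.sqrt ((nTr (wEval (XofDx m D x) (YofD m) [0, 0, 1, 1]) -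
        nTr (wEval (XofDx m D x) (YofD m) [0, 1, 0, 1])) / (2 * t)))
    (hpsd : (M2mat (XofDx m D x) (YofD m) -
        t • M2mat !![a, b; b, c] !![(1 : ℝ), 0; 0, -1]).PosSemidef) :
    c = 0 ∧
    a = 4 * (x ⬝ᵥ D.mulVec x) /
        (((m : ℝ) + 1) * (nTr (wEval (XofDx m D x) (YofD m) [0, 0, 1, 1]) -
          nTr (wEval (XofDx m D x) (YofD m) [0, 1, 0, 1]))) := by
  classical
  set Bm : Matrix (Fin m) (Fin 1) ℝ := Matrix.of fun i (_ : Fin 1) => x i with hBm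
  set Cm : Matrix (Fin 1) (Fin m) ℝ := Matrix.of fun (_ : Fin 1) j => x j with hCm
  set s : ℝ := x ⬝ᵥ x with hsdef
  set p : ℝ := x ⬝ᵥ D.mulVec x with hpdef
  set d2 : ℝ := (D * D).trace with hd2
  set d3 : ℝ := (D * (D * D)).trace with hd3
  have hn : ((m : ℝ) + 1) ≠ 0 := by positivity
  -- transfer of traces through the reindexing
  have hTr : ∀ w : Word, nTr (wEval (XofDx m D x) (YofD m) w)
      = (wEval (fromBlocks D Bm Cm (0 : Matrix (Fin 1) (Fin 1) ℝ))
          (fromBlocks (1 : Matrix (Fin m) (Fin m) ℝ) 0 0 (-1 : Matrix (Fin 1) (Fin 1) ℝ)) w).trace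
        / ((m : ℝ) + 1) := by
    intro w
    rw [XofDx, YofD, wEval_reindex, nTr, my_trace_reindex]
    norm_num
    rfl
  -- scalar values of block traces
  have hs1 : (Cm * Bm).trace = s := by
    simp [hBm, hCm, Matrix.trace, Matrix.diag, Matrix.mul_apply, hsdef, dotProduct]
  have hs2 : (Bm * Cm).trace = s := by rw [Matrix.trace_mul_comm]; exact hs1
  have hp1 : (Cm * (D * Bm)).trace = p := by
    simp [hBm, hCm, Matrix.trace, Matrix.diag, Matrix.mul_apply, hpdef, dotProduct,
      Matrix.mulVec, Finset.mul_sum]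
  have hp2 : (Bm * (Cm * D)).trace = p := by
    rw [Matrix.trace_mul_comm, Matrix.mul_assoc]; exact hp1
  have hp3 : (D * (Bm * Cm)).trace = p := by
    rw [Matrix.trace_mul_comm, Matrix.mul_assoc]; exact hp2
  -- traces of the words we need
  have e00 : nTr (wEval (XofDx m D x) (YofD m) [0, 0]) = (d2 + 2 * s) / ((m : ℝ) + 1) := by
    rw [hTr]
    simp only [wEval, Matrix.fromBlocks_multiply, my_trace_fromBlocks, reduceIte,
      Matrix.mul_one, Matrix.one_mul, Matrix.mul_zero, Matrix.zero_mul, add_zero, zero_add,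
      Matrix.trace_add, mul_add, add_mul, Matrix.mul_assoc, Fin.one_eq_zero_iff,
      Matrix.neg_mul, Matrix.mul_neg, neg_neg, Matrix.trace_neg, OfNat.ofNat_ne_one, neg_zero,
      Matrix.trace_zero, Matrix.zero_apply, if_false, hs1, hs2, hp1, hp2, hp3]
    ring
  have e001 : nTr (wEval (XofDx m D x) (YofD m) [0, 0, 1]) = d2 / ((m : ℝ) + 1) := by
    rw [hTr]
    simp only [wEval, Matrix.fromBlocks_multiply, my_trace_fromBlocks, reduceIte,
      Matrix.mul_one, Matrix.one_mul, Matrix.mul_zero, Matrix.zero_mul, add_zero, zero_add,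
      Matrix.trace_add, mul_add, add_mul, Matrix.mul_assoc, Fin.one_eq_zero_iff,
      Matrix.neg_mul, Matrix.mul_neg, neg_neg, Matrix.trace_neg, OfNat.ofNat_ne_one, neg_zero,
      Matrix.trace_zero, Matrix.zero_apply, if_false, hs1, hs2, hp1, hp2, hp3]
    ring
  have e100 : nTr (wEval (XofDx m D x) (YofD m) [1, 0, 0]) = d2 / ((m : ℝ) + 1) := by
    rw [hTr]
    simp only [wEval, Matrix.fromBlocks_multiply, my_trace_fromBlocks, reduceIte,
      Matrix.mul_one, Matrix.one_mul, Matrix.mul_zero, Matrix.zero_mul, add_zero, zero_add,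
      Matrix.trace_add, mul_add, add_mul, Matrix.mul_assoc, Fin.one_eq_zero_iff,
      Matrix.neg_mul, Matrix.mul_neg, neg_neg, Matrix.trace_neg, OfNat.ofNat_ne_one, neg_zero,
      Matrix.trace_zero, Matrix.zero_apply, if_false, hs1, hs2, hp1, hp2, hp3]
    ring
  have e1001 : nTr (wEval (XofDx m D x) (YofD m) [1, 0, 0, 1]) = (d2 + 2 * s) / ((m : ℝ) + 1) := by
    rw [hTr]
    simp only [wEval, Matrix.fromBlocks_multiply, my_trace_fromBlocks, reduceIte,
      Matrix.mul_one, Matrix.one_mul, Matrix.mul_zero, Matrix.zero_mul, add_zero, zero_add,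
      Matrix.trace_add, mul_add, add_mul, Matrix.mul_assoc, Fin.one_eq_zero_iff,
      Matrix.neg_mul, Matrix.mul_neg, neg_neg, Matrix.trace_neg, OfNat.ofNat_ne_one, neg_zero,
      Matrix.trace_zero, Matrix.zero_apply, if_false, hs1, hs2, hp1, hp2, hp3]
    ring
  have e0011 : nTr (wEval (XofDx m D x) (YofD m) [0, 0, 1, 1]) = (d2 + 2 * s) / ((m : ℝ) + 1) := by
    rw [hTr]
    simp only [wEval, Matrix.fromBlocks_multiply, my_trace_fromBlocks, reduceIte,
      Matrix.mul_one, Matrix.one_mul, Matrix.mul_zero, Matrix.zero_mul, add_zero, zero_add,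
      Matrix.trace_add, mul_add, add_mul, Matrix.mul_assoc, Fin.one_eq_zero_iff,
      Matrix.neg_mul, Matrix.mul_neg, neg_neg, Matrix.trace_neg, OfNat.ofNat_ne_one, neg_zero,
      Matrix.trace_zero, Matrix.zero_apply, if_false, hs1, hs2, hp1, hp2, hp3]
    ring
  have e0101 : nTr (wEval (XofDx m D x) (YofD m) [0, 1, 0, 1]) = (d2 - 2 * s) / ((m : ℝ) + 1) := by
    rw [hTr]
    simp only [wEval, Matrix.fromBlocks_multiply, my_trace_fromBlocks, reduceIte,
      Matrix.mul_one, Matrix.one_mul, Matrix.mul_zero, Matrix.zero_mul, add_zero, zero_add,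
      Matrix.trace_add, mul_add, add_mul, Matrix.mul_assoc, Fin.one_eq_zero_iff,
      Matrix.neg_mul, Matrix.mul_neg, neg_neg, Matrix.trace_neg, OfNat.ofNat_ne_one, neg_zero,
      Matrix.trace_zero, Matrix.zero_apply, if_false, hs1, hs2, hp1, hp2, hp3]
    ring
  have e000 : nTr (wEval (XofDx m D x) (YofD m) [0, 0, 0]) = (d3 + 3 * p) / ((m : ℝ) + 1) := by
    rw [hTr]
    simp only [wEval, Matrix.fromBlocks_multiply, my_trace_fromBlocks, reduceIte,
      Matrix.mul_one, Matrix.one_mul, Matrix.mul_zero, Matrix.zero_mul, add_zero, zero_add,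
      Matrix.trace_add, mul_add, add_mul, Matrix.mul_assoc, Fin.one_eq_zero_iff,
      Matrix.neg_mul, Matrix.mul_neg, neg_neg, Matrix.trace_neg, OfNat.ofNat_ne_one, neg_zero,
      Matrix.trace_zero, Matrix.zero_apply, if_false, hs1, hs2, hp1, hp2, hp3]
    ring
  have e0001 : nTr (wEval (XofDx m D x) (YofD m) [0, 0, 0, 1]) = (d3 + p) / ((m : ℝ) + 1) := by
    rw [hTr]
    simp only [wEval, Matrix.fromBlocks_multiply, my_trace_fromBlocks, reduceIte,
      Matrix.mul_one, Matrix.one_mul, Matrix.mul_zero, Matrix.zero_mul, add_zero, zero_add,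
      Matrix.trace_add, mul_add, add_mul, Matrix.mul_assoc, Fin.one_eq_zero_iff,
      Matrix.neg_mul, Matrix.mul_neg, neg_neg, Matrix.trace_neg, OfNat.ofNat_ne_one, neg_zero,
      Matrix.trace_zero, Matrix.zero_apply, if_false, hs1, hs2, hp1, hp2, hp3]
    ring
  have e1000 : nTr (wEval (XofDx m D x) (YofD m) [1, 0, 0, 0]) = (d3 + p) / ((m : ℝ) + 1) := by
    rw [hTr]
    simp only [wEval, Matrix.fromBlocks_multiply, my_trace_fromBlocks, reduceIte,
      Matrix.mul_one, Matrix.one_mul, Matrix.mul_zero, Matrix.zero_mul, add_zero, zero_add,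
      Matrix.trace_add, mul_add, add_mul, Matrix.mul_assoc, Fin.one_eq_zero_iff,
      Matrix.neg_mul, Matrix.mul_neg, neg_neg, Matrix.trace_neg, OfNat.ofNat_ne_one, neg_zero,
      Matrix.trace_zero, Matrix.zero_apply, if_false, hs1, hs2, hp1, hp2, hp3]
    ring
  have f00 : nTr (wEval !![a, b; b, c] !![(1 : ℝ), 0; 0, -1] [0, 0]) = (a ^ 2 + 2 * b ^ 2 + c ^ 2) / 2 := by
    simp [wEval, nTr, Matrix.mul_fin_two, Matrix.trace_fin_two_of]
    ring
  have f001 : nTr (wEval !![a, b; b, c] !![(1 : ℝ), 0; 0, -1] [0, 0, 1]) = (a ^ 2 - c ^ 2) / 2 := by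
    simp [wEval, nTr, Matrix.mul_fin_two, Matrix.trace_fin_two_of]
    ring
  have f100 : nTr (wEval !![a, b; b, c] !![(1 : ℝ), 0; 0, -1] [1, 0, 0]) = (a ^ 2 - c ^ 2) / 2 := by
    simp [wEval, nTr, Matrix.mul_fin_two, Matrix.trace_fin_two_of]
    ring
  have f1001 : nTr (wEval !![a, b; b, c] !![(1 : ℝ), 0; 0, -1] [1, 0, 0, 1]) = (a ^ 2 + 2 * b ^ 2 + c ^ 2) / 2 := by
    simp [wEval, nTr, Matrix.mul_fin_two, Matrix.trace_fin_two_of]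
    ring
  have f000 : nTr (wEval !![a, b; b, c] !![(1 : ℝ), 0; 0, -1] [0, 0, 0]) = (a ^ 3 + c ^ 3 + 3 * a * b ^ 2 + 3 * b ^ 2 * c) / 2 := by
    simp [wEval, nTr, Matrix.mul_fin_two, Matrix.trace_fin_two_of]
    ring
  have f0001 : nTr (wEval !![a, b; b, c] !![(1 : ℝ), 0; 0, -1] [0, 0, 0, 1]) = (a ^ 3 - c ^ 3 + a * b ^ 2 - b ^ 2 * c) / 2 := by
    simp [wEval, nTr, Matrix.mul_fin_two, Matrix.trace_fin_two_of]
    ring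
  have f1000 : nTr (wEval !![a, b; b, c] !![(1 : ℝ), 0; 0, -1] [1, 0, 0, 0]) = (a ^ 3 - c ^ 3 + a * b ^ 2 - b ^ 2 * c) / 2 := by
    simp [wEval, nTr, Matrix.mul_fin_two, Matrix.trace_fin_two_of]
    ring
  have hDelta : nTr (wEval (XofDx m D x) (YofD m) [0, 0, 1, 1]) -
      nTr (wEval (XofDx m D x) (YofD m) [0, 1, 0, 1]) = 4 * s / ((m : ℝ) + 1) := by
    rw [e0011, e0101]; ring
  have hm1 : (0 : ℝ) < (m : ℝ) + 1 := by positivity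
  have hspos : 0 < s := by
    rw [hDelta] at hΔpos
    have h4 : 0 < 4 * s / ((m : ℝ) + 1) * ((m : ℝ) + 1) := mul_pos hΔpos hm1
    rw [div_mul_cancel₀ _ (ne_of_gt hm1)] at h4
    linarith
  have hb2 : 2 * t * b ^ 2 = 4 * s / ((m : ℝ) + 1) := by
    rw [← hDelta]
    rw [hb, Real.sq_sqrt (by positivity)]
    field_simp
  set Qv : ℝ := nTr (wEval (XofDx m D x) (YofD m) [0, 0, 0, 0]) -
      t * nTr (wEval !![a, b; b, c] !![(1 : ℝ), 0; 0, -1] [0, 0, 0, 0]) with hQv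
  have key : ∀ r : ℝ, 0 ≤ (4 * s / ((m : ℝ) + 1) - 2 * t * (b ^ 2 + c ^ 2)) * r ^ 2 +
      (4 * p / ((m : ℝ) + 1) - 2 * t * (c ^ 3 + a * b ^ 2 + 2 * b ^ 2 * c)) * r + Qv := by
    intro r
    have h1 := hpsd.dotProduct_mulVec_nonneg (fun i : Fin 7 => if i = 1 then r else if i = 3 then 1 else if i = 4 then -r else 0)
    simp only [Matrix.mulVec, dotProduct, Fin.sum_univ_seven, Matrix.sub_apply,
      Matrix.smul_apply, M2mat, w7, star_trivial, Matrix.of_apply, Matrix.cons_val_zero,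
      Matrix.cons_val_one, Matrix.head_cons, Matrix.cons_val_two, Matrix.tail_cons,
      Matrix.cons_val_three, Matrix.cons_val_four, List.reverse_cons, List.reverse_nil,
      List.nil_append, List.cons_append, List.append_nil, Fin.reduceEq, if_true, if_false,
      reduceIte, smul_eq_mul, mul_zero, zero_mul, mul_one, one_mul, add_zero, zero_add,
      mul_neg, neg_mul, Pi.star_apply] at h1
    rw [e00, e001, e100, e1001, e000, e0001, e1000, f00, f001, f100, f1001, f000, f0001,
      f1000] at h1
    exact h1.trans_eq (by rw [hQv]; ring)
  have hK : (4 * s / ((m : ℝ) + 1) - 2 * t * (b ^ 2 + c ^ 2)) ≤ 0 := by nlinarith [hb2, sq_nonneg c, ht]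
  obtain ⟨hK0, hL0⟩ := quad_forced hK key
  have hc : c = 0 := by
    have hc2 : 2 * t * c ^ 2 = 0 := by linarith [hb2, hK0]
    have : c ^ 2 = 0 := by
      rcases mul_eq_zero.1 hc2 with h | h
      · linarith
      · exact h
    exact pow_eq_zero_iff (n := 2) (by norm_num) |>.1 this
  refine ⟨hc, ?_⟩
  subst hc
  have hps : 4 * p = a * (4 * s) := by
    have h1 : 4 * p / ((m : ℝ) + 1) = a * (4 * s / ((m : ℝ) + 1)) := by
      rw [← hb2]; linear_combination hL0
    field_simp at h1
    linarith [h1]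
  rw [hDelta]
  rw [show ((m : ℝ) + 1) * (4 * s / ((m : ℝ) + 1)) = 4 * s by field_simp]
  rw [eq_div_iff (by positivity : (4 : ℝ) * s ≠ 0)]
  linarith [hps]
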